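/- Let α₁, α₂, α₃ ∈ ℤ² and c = (c₁, c₂, c₃) ∈ ℝ³. Let e = (α₁₁, α₂₁, α₃₁) ∈ ℤ³ and f = (α₁₂, α₂₂, α₃₂) ∈ ℤ³ be the two columns of the 3×2 integer matrix whose rows are α₁, α₂, α₃, and let ν = e × f ∈ ℤ³ be their cross product. Assume ν ≠ 0. Then there exists a point x ∈ ℝ² with ⟨x, αᵢ⟩ − cᵢ ∈ ℤ for all i = 1, 2, 3 (i.e. the three torus lines with normals αᵢ and parameters cᵢ have a common point on ℝ²/ℤ²) if and only if c₁ν₁ + c₂ν₂ + c₃ν₃ ∈ gcd(ν₁, ν₂, ν₃)·ℤ. -/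

import Mathlib

lemma solve3 (e f b : Fin 3 → ℝ)
    (h0 : (e 1 * f 2 - e 2 * f 1) * b 0 + (e 2 * f 0 - e 0 * f 2) * b 1 +
      (e 0 * f 1 - e 1 * f 0) * b 2 = 0)
    (hne : ¬(e 1 * f 2 - e 2 * f 1 = 0 ∧ e 2 * f 0 - e 0 * f 2 = 0 ∧
      e 0 * f 1 - e 1 * f 0 = 0)) :
    ∃ x0 x1 : ℝ, ∀ i, x0 * e i + x1 * f i = b i := by
  by_cases h2 : e 0 * f 1 - e 1 * f 0 = 0
  · by_cases h1 : e 2 * f 0 - e 0 * f 2 = 0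
    · have hd : e 1 * f 2 - e 2 * f 1 ≠ 0 := fun h => hne ⟨h, h1, h2⟩
      refine ⟨(b 1 * f 2 - b 2 * f 1) / (e 1 * f 2 - e 2 * f 1),
        (e 1 * b 2 - e 2 * b 1) / (e 1 * f 2 - e 2 * f 1), fun i => ?_⟩
      match i with
      | 0 => rw [div_mul_eq_mul_div, div_mul_eq_mul_div, ← add_div, div_eq_iff hd]; linear_combination -h0
      | 1 => rw [div_mul_eq_mul_div, div_mul_eq_mul_div, ← add_div, div_eq_iff hd]; ring
      | 2 => rw [div_mul_eq_mul_div, div_mul_eq_mul_div, ← add_div, div_eq_iff hd]; ring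
    · refine ⟨(b 2 * f 0 - b 0 * f 2) / (e 2 * f 0 - e 0 * f 2),
        (e 2 * b 0 - e 0 * b 2) / (e 2 * f 0 - e 0 * f 2), fun i => ?_⟩
      match i with
      | 0 => rw [div_mul_eq_mul_div, div_mul_eq_mul_div, ← add_div, div_eq_iff h1]; ring
      | 1 => rw [div_mul_eq_mul_div, div_mul_eq_mul_div, ← add_div, div_eq_iff h1]; linear_combination -h0
      | 2 => rw [div_mul_eq_mul_div, div_mul_eq_mul_div, ← add_div, div_eq_iff h1]; ring
  · refine ⟨(b 0 * f 1 - b 1 * f 0) / (e 0 * f 1 - e 1 * f 0),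
      (e 0 * b 1 - e 1 * b 0) / (e 0 * f 1 - e 1 * f 0), fun i => ?_⟩
    match i with
    | 0 => rw [div_mul_eq_mul_div, div_mul_eq_mul_div, ← add_div, div_eq_iff h2]; ring
    | 1 => rw [div_mul_eq_mul_div, div_mul_eq_mul_div, ← add_div, div_eq_iff h2]; ring
    | 2 => rw [div_mul_eq_mul_div, div_mul_eq_mul_div, ← add_div, div_eq_iff h2]; linear_combination -h0

/-- Three torus lines with integer normals `α i` and parameters `c i`
have a common point on `ℝ²/ℤ²` iff `⟨c, ν⟩ ∈ gcd(ν)·ℤ`, where `ν = e × f` is the cross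
product of the two columns of the `3×2` integer matrix with rows `α 0, α 1, α 2`. -/
theorem stmt_6 (α : Fin 3 → Fin 2 → ℤ) (c : Fin 3 → ℝ) (e f ν : Fin 3 → ℤ)
    (he : e = fun i => α i 0) (hf : f = fun i => α i 1)
    (hν : ν = ![e 1 * f 2 - e 2 * f 1, e 2 * f 0 - e 0 * f 2, e 0 * f 1 - e 1 * f 0])
    (hne : ν ≠ 0) :
    (∃ x : Fin 2 → ℝ, ∀ i : Fin 3, ∃ k : ℤ, (∑ j, x j * (α i j : ℝ)) - c i = (k : ℝ)) ↔
      ∃ k : ℤ, c 0 * (ν 0 : ℝ) + c 1 * (ν 1 : ℝ) + c 2 * (ν 2 : ℝ) =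
        (k : ℝ) * (Int.gcd (Int.gcd (ν 0) (ν 1)) (ν 2) : ℝ) := by
  have hν0 : ν 0 = e 1 * f 2 - e 2 * f 1 := by rw [hν]; rfl
  have hν1 : ν 1 = e 2 * f 0 - e 0 * f 2 := by rw [hν]; rfl
  have hν2 : ν 2 = e 0 * f 1 - e 1 * f 0 := by rw [hν]; rfl
  set G : ℕ := Int.gcd (Int.gcd (ν 0) (ν 1)) (ν 2) with hG
  constructor
  · rintro ⟨x, hx⟩
    obtain ⟨k0, hk0⟩ := hx 0
    obtain ⟨k1, hk1⟩ := hx 1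
    obtain ⟨k2, hk2⟩ := hx 2
    simp only [Fin.sum_univ_two] at hk0 hk1 hk2
    have hdvd : (G : ℤ) ∣ k0 * ν 0 + k1 * ν 1 + k2 * ν 2 := by
      have d0 : (G : ℤ) ∣ ν 0 := dvd_trans (Int.gcd_dvd_left _ _) (Int.gcd_dvd_left _ _)
      have d1 : (G : ℤ) ∣ ν 1 := dvd_trans (Int.gcd_dvd_left _ _) (Int.gcd_dvd_right _ _)
      have d2 : (G : ℤ) ∣ ν 2 := Int.gcd_dvd_right _ _
      exact dvd_add (dvd_add (d0.mul_left _) (d1.mul_left _)) (d2.mul_left _)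
    obtain ⟨m, hm⟩ := hdvd
    refine ⟨-m, ?_⟩
    rw [hν0, hν1, hν2, he, hf] at hm ⊢
    have hmR : (k0 : ℝ) * (α 1 0 * α 2 1 - α 2 0 * α 1 1)
        + (k1 : ℝ) * (α 2 0 * α 0 1 - α 0 0 * α 2 1)
        + (k2 : ℝ) * (α 0 0 * α 1 1 - α 1 0 * α 0 1) = (G : ℝ) * (m : ℝ) := by
      exact_mod_cast hm
    push_cast
    linear_combination (-(α 1 0 * α 2 1 - α 2 0 * α 1 1 : ℝ)) * hk0
      + (-(α 2 0 * α 0 1 - α 0 0 * α 2 1 : ℝ)) * hk1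
      + (-(α 0 0 * α 1 1 - α 1 0 * α 0 1 : ℝ)) * hk2 - hmR
  · rintro ⟨m, hm⟩
    -- Bezout coefficients
    obtain ⟨p, q, r, hpqr⟩ : ∃ p q r : ℤ, ν 0 * p + ν 1 * q + ν 2 * r = (G : ℤ) := by
      refine ⟨Int.gcdA (ν 0) (ν 1) * Int.gcdA (Int.gcd (ν 0) (ν 1) : ℤ) (ν 2),
        Int.gcdB (ν 0) (ν 1) * Int.gcdA (Int.gcd (ν 0) (ν 1) : ℤ) (ν 2),
        Int.gcdB (Int.gcd (ν 0) (ν 1) : ℤ) (ν 2), ?_⟩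
      have h1 := Int.gcd_eq_gcd_ab (ν 0) (ν 1)
      have h2 := Int.gcd_eq_gcd_ab (Int.gcd (ν 0) (ν 1) : ℤ) (ν 2)
      have h3 : Int.gcd ((Int.gcd (ν 0) (ν 1) : ℤ)) (ν 2) = G := by
        rw [hG]
      rw [h3] at h2
      linear_combination -h2 - Int.gcdA (Int.gcd (ν 0) (ν 1) : ℤ) (ν 2) * h1
    set K : Fin 3 → ℤ := ![-(m * p), -(m * q), -(m * r)] with hK
    have hb0 : ((ν 0 : ℝ)) * (c 0 + K 0) + (ν 1 : ℝ) * (c 1 + K 1)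
        + (ν 2 : ℝ) * (c 2 + K 2) = 0 := by
      have hpqrR : (ν 0 : ℝ) * p + (ν 1 : ℝ) * q + (ν 2 : ℝ) * r = (G : ℝ) := by
        exact_mod_cast hpqr
      simp only [hK, Matrix.cons_val_zero, Matrix.cons_val_one, Matrix.head_cons,
        Matrix.cons_val_two, Matrix.tail_cons]
      push_cast
      linear_combination hm - (m : ℝ) * hpqrR
    have hsolve := solve3 (fun i => (e i : ℝ)) (fun i => (f i : ℝ))
      (fun i => c i + K i) ?_ ?_
    · obtain ⟨x0, x1, hsol⟩ := hsolve
      refine ⟨![x0, x1], fun i => ⟨K i, ?_⟩⟩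
      have := hsol i
      simp only [he, hf] at this
      simp only [Fin.sum_univ_two, Matrix.cons_val_zero, Matrix.cons_val_one,
        Matrix.head_cons]
      linarith [this]
    · -- orthogonality
      have c0 : ((e 1 : ℝ) * f 2 - e 2 * f 1) = (ν 0 : ℝ) := by
        rw [hν0]; push_cast; ring
      have c1 : ((e 2 : ℝ) * f 0 - e 0 * f 2) = (ν 1 : ℝ) := by
        rw [hν1]; push_cast; ring
      have c2 : ((e 0 : ℝ) * f 1 - e 1 * f 0) = (ν 2 : ℝ) := by
        rw [hν2]; push_cast; ring
      simpa only [c0, c1, c2] using hb0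
    · rintro ⟨z0, z1, z2⟩
      apply hne
      have z0' : (e 1 : ℝ) * (f 2 : ℝ) - (e 2 : ℝ) * (f 1 : ℝ) = 0 := z0
      have z1' : (e 2 : ℝ) * (f 0 : ℝ) - (e 0 : ℝ) * (f 2 : ℝ) = 0 := z1
      have z2' : (e 0 : ℝ) * (f 1 : ℝ) - (e 1 : ℝ) * (f 0 : ℝ) = 0 := z2
      have e0 : ν 0 = 0 := by rw [hν0]; exact_mod_cast z0'
      have e1 : ν 1 = 0 := by rw [hν1]; exact_mod_cast z1'
      have e2 : ν 2 = 0 := by rw [hν2]; exact_mod_cast z2'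
      funext i
      match i with
      | 0 => exact e0
      | 1 => exact e1
      | 2 => exact e2
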